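/- arXiv:2301.08531 — 2 statements merged into one kernel-verified Lean document; each statement's English description precedes it below -/
import Mathlib

section
/- There exist a bound B and constants B₀, C₀ > 0 and 1 < C₁ < C₂ such that for every integer N > B there exist an integer n < B₀·log N and positive integer exponents e₁,…,eₙ with the following property. Letting ℓᵢ denote the (n−i+1)-th smallest prime number and Lᵢ = ℓᵢ^{eᵢ}, and letting Φ(ℓ^e) = ℓ^{e−1}(ℓ+1), one has: √(C₀·log N) ≤ Φ(Lᵢ) < C₀·log N for all 1 ≤ i ≤ n−1; (C₀/2)·log N ≤ Φ(Lₙ) < C₀·log N; and C₁·N ≤ ∏_{i=1}^{n} Φ(Lᵢ) < C₂·N. -/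
set_option maxHeartbeats 2000000

lemma cb_le (n : ℕ) (hn : 0 < n) :
    Nat.centralBinom n ≤ (2*n) ^ (Nat.count Nat.Prime (2*n+1)) := by
  have hb : n.centralBinom ≠ 0 := n.centralBinom_pos.ne'
  have hsub : n.centralBinom.factorization.support ⊆
      Finset.filter (fun p => Nat.Prime p) (Finset.range (2*n+1)) := by
    intro p hp
    have hp' : n.centralBinom.factorization p ≠ 0 := Finsupp.mem_support_iff.mp hp
    have hple : p ≤ 2*n :=
      Nat.le_two_mul_of_factorization_centralBinom_pos (Nat.pos_of_ne_zero hp')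
    have hpp : p.Prime := by
      have := (Nat.support_factorization _ ▸ hp)
      exact Nat.prime_of_mem_primeFactors this
    simp [Finset.mem_filter, Finset.mem_range, Nat.lt_succ_iff, hple, hpp]
  calc Nat.centralBinom n
      = ∏ p ∈ n.centralBinom.factorization.support, p ^ n.centralBinom.factorization p :=
        (Nat.factorization_prod_pow_eq_self hb).symm
    _ ≤ ∏ _p ∈ n.centralBinom.factorization.support, 2*n := by
        apply Finset.prod_le_prod'
        intro p _
        have : n.centralBinom = (2*n).choose n := rfl
        rw [this]
        exact Nat.pow_factorization_choose_le (by omega)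
    _ = (2*n) ^ n.centralBinom.factorization.support.card := by
        rw [Finset.prod_const]
    _ ≤ (2*n) ^ (Nat.count Nat.Prime (2*n+1)) := by
        apply Nat.pow_le_pow_right (by omega)
        rw [Nat.count_eq_card_filter_range]
        exact Finset.card_le_card hsub

lemma cheb_count {n : ℕ} (hn : 4 ≤ n) :
    (n:ℝ) ≤ (Nat.count Nat.Prime (2*n+1) + 1) * Real.log (2*n) := by
  set c := Nat.count Nat.Prime (2*n+1) with hc
  have h1 : 4^n < (2*n)^(c+1) := by
    calc 4^n < n * n.centralBinom := Nat.four_pow_lt_mul_centralBinom n hn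
      _ ≤ (2*n) * (2*n)^c := by
          exact Nat.mul_le_mul (by omega) (cb_le n (by omega))
      _ = (2*n)^(c+1) := by ring
  have h2 : ((4:ℝ))^n ≤ ((2*n:ℕ):ℝ)^(c+1) := by
    exact_mod_cast h1.le
  have h3 : (n:ℝ) * Real.log 4 ≤ (c+1) * Real.log (2*n) := by
    have := Real.log_le_log (by positivity) h2
    rw [Real.log_pow, Real.log_pow] at this
    push_cast at this ⊢
    linarith
  have h4 : (1:ℝ) ≤ Real.log 4 := by
    rw [Real.le_log_iff_exp_le (by norm_num)]
    have := Real.exp_one_lt_d9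
    linarith
  calc (n:ℝ) = n * 1 := by ring
    _ ≤ n * Real.log 4 := by
        apply mul_le_mul_of_nonneg_left h4 (by positivity)
    _ ≤ (c+1) * Real.log (2*n) := h3

lemma nth_prime_le {k : ℕ} (hk : 10 ≤ k) :
    ((Nat.nth Nat.Prime k : ℕ) : ℝ) ≤ 10 * k * Real.log k := by
  have hk10 : (10:ℝ) ≤ (k:ℝ) := by exact_mod_cast hk
  have hlogk2 : (2:ℝ) ≤ Real.log k := by
    have h10 : (2:ℝ) ≤ Real.log 10 := by
      rw [Real.le_log_iff_exp_le (by norm_num)]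
      have h := Real.exp_one_lt_d9
      have : Real.exp 2 = Real.exp 1 * Real.exp 1 := by
        rw [← Real.exp_add]; norm_num
      nlinarith [Real.exp_pos 1]
    calc (2:ℝ) ≤ Real.log 10 := h10
      _ ≤ Real.log k := Real.log_le_log (by norm_num) hk10
  have hlogk_le : Real.log k ≤ (k:ℝ) := by
    have := Real.log_le_sub_one_of_pos (show (0:ℝ) < k by linarith)
    linarith
  set x : ℝ := 4 * k * Real.log k with hxdef
  have hx80 : (80:ℝ) ≤ x := by nlinarith
  set n := ⌈x⌉₊ with hndef
  have hxn : x ≤ (n:ℝ) := Nat.le_ceil x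
  have hn80 : 80 ≤ n := by exact_mod_cast hx80.trans hxn
  have hnx : (n:ℝ) ≤ 5 * k * Real.log k := by
    have h1 : (n:ℝ) < x + 1 := Nat.ceil_lt_add_one (by linarith)
    nlinarith
  have h2n : (2*(n:ℝ)) ≤ (k:ℝ)^3 := by
    nlinarith [mul_le_mul_of_nonneg_left hlogk_le (by positivity : (0:ℝ) ≤ (k:ℝ)^2),
      mul_le_mul_of_nonneg_right (show 10*(k:ℝ) ≤ (k:ℝ)^2 by nlinarith)
        (by linarith : (0:ℝ) ≤ Real.log k)]
  have hlog2n : Real.log (2*(n:ℝ)) ≤ 3 * Real.log k := by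
    calc Real.log (2*(n:ℝ)) ≤ Real.log ((k:ℝ)^3) := by
          apply Real.log_le_log (by positivity) h2n
      _ = 3 * Real.log k := by rw [Real.log_pow]; push_cast; ring
  have hlog2npos : (0:ℝ) < Real.log (2*(n:ℝ)) := by
    apply Real.log_pos
    have : (80:ℝ) ≤ (n:ℝ) := by exact_mod_cast hn80
    linarith
  have hkey : ((k:ℝ)+2) * Real.log (2*(n:ℝ)) ≤ (n:ℝ) := by
    calc ((k:ℝ)+2) * Real.log (2*(n:ℝ)) ≤ ((k:ℝ)+2) * (3 * Real.log k) := by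
          apply mul_le_mul_of_nonneg_left hlog2n (by linarith)
      _ ≤ 4 * k * Real.log k := by nlinarith
      _ ≤ (n:ℝ) := hxn
  have hcheb := cheb_count (show 4 ≤ n by omega)
  set c := Nat.count Nat.Prime (2*n+1) with hcdef
  have hc : k < c := by
    by_contra hcon
    push_neg at hcon
    have : ((c:ℝ)+1) ≤ (k:ℝ)+1 := by
      have : (c:ℝ) ≤ (k:ℝ) := by exact_mod_cast hcon
      linarith
    have h5 : (n:ℝ) ≤ ((k:ℝ)+1) * Real.log (2*(n:ℝ)) := by
      calc (n:ℝ) ≤ ((c:ℝ)+1) * Real.log (2*(n:ℝ)) := hcheb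
        _ ≤ ((k:ℝ)+1) * Real.log (2*(n:ℝ)) := by
            apply mul_le_mul_of_nonneg_right this hlog2npos.le
    nlinarith
  have hlt : Nat.nth Nat.Prime k < 2*n+1 := Nat.nth_lt_of_lt_count hc
  have hle : ((Nat.nth Nat.Prime k : ℕ):ℝ) ≤ 2*(n:ℝ) := by
    have : Nat.nth Nat.Prime k ≤ 2*n := by omega
    exact_mod_cast this
  calc ((Nat.nth Nat.Prime k : ℕ):ℝ) ≤ 2*(n:ℝ) := hle
    _ ≤ 10 * k * Real.log k := by nlinarith

lemma hit (q : ℕ) (hq : 2 ≤ q) {x : ℝ} (hx : (q:ℝ)+1 ≤ x) :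
    ∃ k : ℕ, x ≤ ((q:ℝ)+1) * (q:ℝ)^k ∧ ((q:ℝ)+1) * (q:ℝ)^k < (q:ℝ) * x := by
  classical
  have hq1 : (1:ℝ) < (q:ℝ) := by exact_mod_cast hq.trans_lt' one_lt_two
  have hxpos : (0:ℝ) < x := by linarith
  have hex : ∃ k : ℕ, x ≤ ((q:ℝ)+1) * (q:ℝ)^k := by
    obtain ⟨k, hk⟩ := pow_unbounded_of_one_lt x hq1
    exact ⟨k, by nlinarith [pow_pos (by linarith : (0:ℝ) < (q:ℝ)) k]⟩
  set k := Nat.find hex with hkdef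
  have h1 : x ≤ ((q:ℝ)+1) * (q:ℝ)^k := Nat.find_spec hex
  refine ⟨k, h1, ?_⟩
  rcases Nat.eq_zero_or_pos k with h0 | hpos
  · rw [h0]
    simp only [pow_zero, mul_one]
    nlinarith
  · obtain ⟨j, hj⟩ : ∃ j, k = j + 1 := ⟨k-1, by omega⟩
    have hprev : ¬ (x ≤ ((q:ℝ)+1) * (q:ℝ)^j) := Nat.find_min hex (by omega)
    push_neg at hprev
    rw [hj, pow_succ]
    nlinarith [pow_pos (by linarith : (0:ℝ) < (q:ℝ)) j]

lemma window_mem (q : ℕ) (hq : 2 ≤ q) {S T : ℝ} (hS : 1 ≤ S) (hST : S * S ≤ T)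
    (hqT : (q:ℝ)+1 < T) :
    ∃ e : ℕ, 1 ≤ e ∧ S ≤ (q:ℝ)^(e-1) * ((q:ℝ)+1) ∧ (q:ℝ)^(e-1) * ((q:ℝ)+1) < T := by
  rcases le_or_gt S ((q:ℝ)+1) with h | h
  · exact ⟨1, le_rfl, by simpa using h, by simpa using hqT⟩
  · obtain ⟨k, h1, h2⟩ := hit q hq h.le
    refine ⟨k+1, by omega, ?_, ?_⟩
    · simp only [Nat.add_sub_cancel]
      calc S ≤ ((q:ℝ)+1) * (q:ℝ)^k := h1
        _ = (q:ℝ)^k * ((q:ℝ)+1) := by ring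
    · have hqS : (q:ℝ) < S := by
        have : (q:ℝ) < (q:ℝ)+1 := by linarith
        linarith
      have hmul : (q:ℝ) * S < S * S := by nlinarith
      calc (q:ℝ)^(k+1-1) * ((q:ℝ)+1) = ((q:ℝ)+1) * (q:ℝ)^k := by
            simp only [Nat.add_sub_cancel]; ring
        _ < (q:ℝ) * S := h2
        _ < S * S := hmul
        _ ≤ T := hST

/-- `PhiL n e i` is `Φ(Lᵢ)` where `Lᵢ = ℓᵢ^{e i}`, `ℓᵢ` is the `(n-i+1)`-th smallest prime
(`Nat.nth Nat.Prime (n - i)`, zero-indexed), and `Φ(ℓ^e) = ℓ^{e-1} * (ℓ + 1)`. -/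
noncomputable def PhiL (n : ℕ) (e : ℕ → ℕ) (i : ℕ) : ℝ :=
  ((Nat.nth Nat.Prime (n - i)) ^ (e i - 1) * ((Nat.nth Nat.Prime (n - i)) + 1) : ℕ)

/-- Existence of a good-degree basis:  there are a bound `B` and constants
`B₀, C₀ > 0`, `1 < C₁ < C₂` such that every integer `N > B` admits `n < B₀ * log N`
and exponents `e₁, …, eₙ ≥ 1` with
`√(C₀ log N) ≤ Φ(Lᵢ) < C₀ log N` for `1 ≤ i ≤ n-1`,
`(C₀/2) log N ≤ Φ(Lₙ) < C₀ log N`, and `C₁ N ≤ ∏ Φ(Lᵢ) < C₂ N`. -/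
theorem good_degree_basis_exists :
    ∃ (B : ℕ) (B₀ C₀ C₁ C₂ : ℝ),
      0 < B₀ ∧ 0 < C₀ ∧ 1 < C₁ ∧ C₁ < C₂ ∧
      ∀ N : ℕ, B < N →
        ∃ (n : ℕ) (e : ℕ → ℕ), 0 < n ∧ (n : ℝ) < B₀ * Real.log N ∧
          (∀ i, 1 ≤ i → i ≤ n → 1 ≤ e i) ∧
          (∀ i, 1 ≤ i → i ≤ n - 1 →
            Real.sqrt (C₀ * Real.log N) ≤ PhiL n e i ∧ PhiL n e i < C₀ * Real.log N) ∧
          (C₀ / 2 * Real.log N ≤ PhiL n e n ∧ PhiL n e n < C₀ * Real.log N) ∧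
          C₁ * N ≤ ∏ i ∈ Finset.Icc 1 n, PhiL n e i ∧
          ∏ i ∈ Finset.Icc 1 n, PhiL n e i < C₂ * N := by
  classical
  refine ⟨⌈Real.exp 1000000⌉₊, 10, 400, 2, 12, by norm_num, by norm_num, by norm_num,
    by norm_num, ?_⟩
  intro N hN
  -- basic size facts
  have hNR : Real.exp 1000000 ≤ (N:ℝ) := by
    calc Real.exp 1000000 ≤ (⌈Real.exp 1000000⌉₊ : ℝ) := Nat.le_ceil _
      _ ≤ (N:ℝ) := by exact_mod_cast hN.le
  have hN0R : (0:ℝ) < N := lt_of_lt_of_le (Real.exp_pos _) hNR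
  set L := Real.log (N:ℝ) with hLdef
  have hL : (1000000:ℝ) ≤ L := (Real.le_log_iff_exp_le hN0R).2 hNR
  have hNL : (N:ℝ) = Real.exp L := (Real.exp_log hN0R).symm
  set T := (400:ℝ) * L with hTdef
  have hT0 : (0:ℝ) < T := by positivity
  have hTbig : (400000000:ℝ) ≤ T := by rw [hTdef]; linarith
  set S := Real.sqrt T with hSdef
  have hSS : S * S = T := Real.mul_self_sqrt hT0.le
  have hS1 : (20000:ℝ) ≤ S := by
    rw [hSdef]
    rw [show (20000:ℝ) = Real.sqrt (20000^2) by
      rw [Real.sqrt_sq (by norm_num)]]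
    apply Real.sqrt_le_sqrt
    nlinarith
  have hS0 : (0:ℝ) < S := by linarith
  have hS_le_T : S ≤ T := by nlinarith
  have hST : S ≤ T / 3675 := by nlinarith
  -- log facts
  have hlogT_pos : (0:ℝ) < Real.log T := Real.log_pos (by linarith)
  have hlogT_ge1 : (1:ℝ) ≤ Real.log T := by
    rw [Real.le_log_iff_exp_le hT0]
    have := Real.exp_one_lt_d9
    linarith
  have hlogL_le : Real.log L ≤ Real.log T := by
    apply Real.log_le_log (by linarith)
    rw [hTdef]; linarith
  have hlogT_le_L : Real.log T ≤ L := by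
    have h1 : Real.log T = Real.log 400 + Real.log L := by
      rw [hTdef, Real.log_mul (by norm_num) (by positivity)]
    have h2 : Real.log 400 ≤ 6 := by
      rw [Real.log_le_iff_le_exp (by norm_num)]
      have h6 : Real.exp 6 = (Real.exp 1)^6 := by
        rw [← Real.exp_nat_mul]; norm_num
      have hpow : (2.7182818283:ℝ)^6 ≤ (Real.exp 1)^6 :=
        pow_le_pow_left₀ (by norm_num) Real.exp_one_gt_d9.le 6
      have h400 : (400:ℝ) ≤ (2.7182818283:ℝ)^6 := by norm_num
      linarith [h6 ▸ (h400.trans hpow)]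
    have h3 : Real.log L ≤ 2 * Real.sqrt L - 2 := by
      have hs := Real.log_le_sub_one_of_pos (show (0:ℝ) < Real.sqrt L by positivity)
      have : Real.log (Real.sqrt L) = Real.log L / 2 := Real.log_sqrt (by linarith)
      linarith
    have h4 : Real.sqrt L * Real.sqrt L = L := Real.mul_self_sqrt (by linarith)
    have h5 : (1000:ℝ) ≤ Real.sqrt L := by
      rw [show (1000:ℝ) = Real.sqrt (1000^2) by rw [Real.sqrt_sq (by norm_num)]]
      apply Real.sqrt_le_sqrt
      nlinarith
    nlinarith
  -- primes
  set q : ℕ → ℕ := Nat.nth Nat.Prime with hqdef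
  have hq2le : ∀ j, 2 ≤ q j := fun j => (Nat.prime_nth_prime j).two_le
  have hq0 : q 0 = 2 := Nat.nth_prime_zero_eq_two
  have hq1 : q 1 = 3 := Nat.nth_prime_one_eq_three
  have hq2 : q 2 = 5 := by
    have := Nat.nth_count Nat.prime_five
    simpa [hqdef, show Nat.count Nat.Prime 5 = 2 by decide] using this
  have hq3 : q 3 = 7 := by
    have := Nat.nth_count (by norm_num : Nat.Prime 7)
    simpa [hqdef, show Nat.count Nat.Prime 7 = 3 by decide] using this
  -- the Chebyshev consequence
  have cheb : ∀ k : ℕ, (k:ℝ) ≤ 4 + 4*L/Real.log T → ((q k:ℝ) + 1) < T := by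
    intro k hk
    set κ := max k 10 with hκdef
    have hκ10 : 10 ≤ κ := le_max_right _ _
    have hqmono : (q k : ℝ) ≤ (q κ : ℝ) := by
      exact_mod_cast Nat.nth_monotone Nat.infinite_setOf_prime (le_max_left _ _)
    have hcheb := nth_prime_le hκ10
    have hLT_pos : (0:ℝ) < L / Real.log T := by positivity
    have hLT1 : (1:ℝ) ≤ L / Real.log T := (one_le_div hlogT_pos).2 hlogT_le_L
    have hκub : (κ:ℝ) ≤ 18 * L / Real.log T := by
      have hcast : (κ:ℝ) = max (k:ℝ) 10 := by
        rw [hκdef]; simp [Nat.cast_max]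
      rw [hcast]
      have h1 : (k:ℝ) ≤ 4 + 4*L/Real.log T := hk
      have h2 : (4:ℝ) + 4*L/Real.log T ≤ 18 * L / Real.log T := by
        have : (4:ℝ) ≤ 4 * (L / Real.log T) := by linarith
        have h14 : (14:ℝ) ≤ 14 * (L / Real.log T) := by linarith
        have heq : 18 * L / Real.log T = 14 * (L/Real.log T) + 4*L/Real.log T := by ring
        rw [heq]
        linarith
      have h3 : (10:ℝ) ≤ 18 * L / Real.log T := by
        have : (18:ℝ) ≤ 18 * (L/Real.log T) := by linarith
        have heq : 18 * L / Real.log T = 18 * (L/Real.log T) := by ring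
        linarith [heq]
      exact max_le (h1.trans h2) h3
    have hκ18L : (κ:ℝ) ≤ 18 * L := by
      calc (κ:ℝ) ≤ 18 * L / Real.log T := hκub
        _ ≤ 18 * L := by
          apply div_le_self (by linarith) hlogT_ge1
    have hlogκ : Real.log κ ≤ 2 * Real.log T := by
      calc Real.log (κ:ℝ) ≤ Real.log (18 * L) := by
            apply Real.log_le_log (by exact_mod_cast Nat.lt_of_lt_of_le (by norm_num) hκ10)
            exact hκ18L
        _ = Real.log 18 + Real.log L := Real.log_mul (by norm_num) (by positivity)
        _ ≤ Real.log T + Real.log T := by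
            have h18 : Real.log 18 ≤ Real.log T := by
              apply Real.log_le_log (by norm_num); linarith
            linarith
        _ = 2 * Real.log T := by ring
    have hlogκ0 : (0:ℝ) ≤ Real.log κ := by
      apply Real.log_nonneg
      exact_mod_cast Nat.one_le_iff_ne_zero.2 (by omega)
    have hκ0 : (0:ℝ) ≤ (κ:ℝ) := by positivity
    have hbnd : (q k : ℝ) ≤ 360 * L := by
      have heq : 10 * (18 * L / Real.log T) * (2 * Real.log T) = 360 * L := by
        field_simp
        ring
      calc (q k : ℝ) ≤ (q κ : ℝ) := hqmono
        _ ≤ 10 * κ * Real.log κ := hcheb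
        _ ≤ 10 * (18 * L / Real.log T) * Real.log κ := by
            apply mul_le_mul_of_nonneg_right (by linarith) hlogκ0
        _ ≤ 10 * (18 * L / Real.log T) * (2 * Real.log T) := by
            apply mul_le_mul_of_nonneg_left hlogκ (by positivity)
        _ = 360 * L := heq
    rw [hTdef]
    linarith
  -- exponents for the "rigid" primes
  have hBig : ∀ j : ℕ, ∃ e : ℕ, 1 ≤ e ∧
      (((q j:ℝ))+1 < T → (S ≤ (q j:ℝ)^(e-1) * ((q j:ℝ)+1) ∧ (q j:ℝ)^(e-1) * ((q j:ℝ)+1) < T))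
      ∧ (¬(((q j:ℝ))+1 < T) → e = 1) := by
    intro j
    by_cases h : ((q j:ℝ))+1 < T
    · obtain ⟨e, he1, he2, he3⟩ := window_mem (q j) (hq2le j) (by linarith) hSS.le h
      exact ⟨e, he1, fun _ => ⟨he2, he3⟩, fun hc => absurd h hc⟩
    · exact ⟨1, le_rfl, fun hc => absurd hc h, fun _ => rfl⟩
  choose Ebig hE1 hEwin hEinv using hBig
  set FF : ℕ → ℝ := fun j => (q j:ℝ)^(Ebig j - 1) * ((q j:ℝ)+1) with hFFdef
  have hFF2 : ∀ j, 2 ≤ FF j := by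
    intro j
    by_cases h : ((q j:ℝ))+1 < T
    · have := (hEwin j h).1
      simp only [hFFdef]
      linarith
    · have he := hEinv j h
      have h2q : (2:ℝ) ≤ (q j : ℝ) := by exact_mod_cast hq2le j
      simp only [hFFdef, he, Nat.sub_self, pow_zero, one_mul]
      linarith
  have hFFpos : ∀ j, (0:ℝ) < FF j := fun j => lt_of_lt_of_le (by norm_num) (hFF2 j)
  set G : ℕ → ℝ := fun m => ∏ j ∈ Finset.Ico 4 m, FF j with hGdef
  have hGpos : ∀ m, 0 < G m := by
    intro m
    apply Finset.prod_pos
    intro j _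
    exact hFFpos j
  set W : ℝ := 420 * N / T^4 with hWdef
  have hT4pos : (0:ℝ) < T^4 := by positivity
  -- N is much bigger than T^4
  have hNT4 : T^4 ≤ (N:ℝ) := by
    have hexp8 : Real.exp L = (Real.exp (L/8))^8 := by
      rw [← Real.exp_nat_mul]
      congr 1
      push_cast
      ring
    have h8 : L/8 ≤ Real.exp (L/8) := by
      have := Real.add_one_le_exp (L/8)
      linarith
    have hL8 : (0:ℝ) ≤ L/8 := by linarith
    have hp : (L/8)^8 ≤ (Real.exp (L/8))^8 := by
      apply pow_le_pow_left₀ hL8 h8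
    have heq : (L/8)^8 = ((L^2)/64)^4 := by ring
    have hcmp : T^4 ≤ ((L^2)/64)^4 := by
      have h1 : T ≤ (L^2)/64 := by rw [hTdef]; nlinarith
      exact pow_le_pow_left₀ hT0.le h1 4
    calc T^4 ≤ ((L^2)/64)^4 := hcmp
      _ = (L/8)^8 := heq.symm
      _ ≤ (Real.exp (L/8))^8 := hp
      _ = Real.exp L := hexp8.symm
      _ = (N:ℝ) := hNL.symm
  have hW1 : (1:ℝ) < W := by
    rw [hWdef, lt_div_iff₀ hT4pos]
    linarith
  have hWpos : (0:ℝ) < W := by linarith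
  -- choose m minimal with W ≤ G m
  have hGgrow : ∀ m, (2:ℝ)^(m-4) ≤ G m := by
    intro m
    calc (2:ℝ)^(m-4) = ∏ _j ∈ Finset.Ico 4 m, (2:ℝ) := by
          rw [Finset.prod_const, Nat.card_Ico]
      _ ≤ ∏ j ∈ Finset.Ico 4 m, FF j := by
          apply Finset.prod_le_prod (fun _ _ => by norm_num) (fun j _ => hFF2 j)
  have hexM : ∃ m, W ≤ G m := by
    obtain ⟨t, ht⟩ := pow_unbounded_of_one_lt W (by norm_num : (1:ℝ) < 2)
    refine ⟨t+4, le_trans ht.le ?_⟩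
    have : t + 4 - 4 = t := by omega
    calc (2:ℝ)^t = (2:ℝ)^(t+4-4) := by rw [this]
      _ ≤ G (t+4) := hGgrow _
  set m := Nat.find hexM with hmdef
  have hmW : W ≤ G m := Nat.find_spec hexM
  have hmmin : ∀ k, k < m → G k < W := by
    intro k hk
    have := Nat.find_min hexM hk
    push_neg at this
    exact this
  have hm5 : 5 ≤ m := by
    by_contra hcon
    push_neg at hcon
    have hGm : G m = 1 := by
      simp only [hGdef]
      rw [Finset.Ico_eq_empty (by omega)]
      exact Finset.prod_empty
    rw [hGm] at hmW
    linarith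
  -- the bound on indices
  have bnd : ∀ k, 4 ≤ k → (∀ j, 4 ≤ j → j < k → S ≤ FF j) → G k < W →
      (k:ℝ) ≤ 4 + 4*L/Real.log T := by
    intro k hk4 hFFj hGkW
    have hGk : S^(k-4) ≤ G k := by
      calc S^(k-4) = ∏ _j ∈ Finset.Ico 4 k, S := by
            rw [Finset.prod_const, Nat.card_Ico]
        _ ≤ ∏ j ∈ Finset.Ico 4 k, FF j := by
            apply Finset.prod_le_prod (fun _ _ => hS0.le)
            intro j hj
            rw [Finset.mem_Ico] at hj
            exact hFFj j hj.1 hj.2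
    have hSW : S^(k-4) < W := lt_of_le_of_lt hGk hGkW
    have hWle : W ≤ 420 * N := by
      rw [hWdef]
      apply div_le_self (by positivity)
      have hT1 : (1:ℝ) ≤ T := by linarith
      calc (1:ℝ) = 1^4 := by norm_num
        _ ≤ T^4 := pow_le_pow_left₀ (by norm_num) hT1 4
    have hlog : ((k-4:ℕ):ℝ) * Real.log S ≤ Real.log (420 * N) := by
      have h1 : Real.log (S^(k-4)) ≤ Real.log (420*N) := by
        apply Real.log_le_log (by positivity)
        linarith
      rwa [Real.log_pow] at h1
    have hlogS : Real.log S = Real.log T / 2 := by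
      rw [hSdef]; exact Real.log_sqrt hT0.le
    have hlog420N : Real.log (420 * N) ≤ 2 * L := by
      rw [Real.log_mul (by norm_num) (by positivity)]
      have h420 : Real.log 420 ≤ 419 := by
        have := Real.log_le_sub_one_of_pos (show (0:ℝ) < 420 by norm_num)
        linarith
      rw [← hLdef]
      linarith
    have hcast : ((k-4:ℕ):ℝ) = (k:ℝ) - 4 := by
      have : (4:ℕ) ≤ k := hk4
      push_cast [Nat.cast_sub this]
      ring
    rw [hcast, hlogS] at hlog
    have hfin : ((k:ℝ) - 4) * (Real.log T / 2) ≤ 2 * L := le_trans hlog hlog420N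
    have hk4' : (k:ℝ) - 4 ≤ 4 * L / Real.log T := by
      rw [le_div_iff₀ hlogT_pos]
      linarith only [hfin]
    linarith only [hk4']
  -- all primes used are small
  have key : ∀ k, k < m → 4 ≤ k → ((q k:ℝ) + 1) < T := by
    intro k
    induction k using Nat.strong_induction_on with
    | _ k IH =>
      intro hkm hk4
      apply cheb
      apply bnd k hk4 _ (hmmin k hkm)
      intro j h4 hjk
      exact (hEwin j (IH j hjk (lt_trans hjk hkm) h4)).1
  have hFFgood : ∀ j, 4 ≤ j → j < m → S ≤ FF j ∧ FF j < T :=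
    fun j h4 hj => hEwin j (key j hj h4)
  -- bound on m
  have hm1bnd : ((m-1:ℕ):ℝ) ≤ 4 + 4*L/Real.log T := by
    apply bnd (m-1) (by omega)
    · intro j h4 hj
      exact (hFFgood j h4 (by omega)).1
    · exact hmmin (m-1) (by omega)
  have hmbnd : (m:ℝ) < 10 * L := by
    have hcast : (m:ℝ) = ((m-1:ℕ):ℝ) + 1 := by
      have : m - 1 + 1 = m := by omega
      exact_mod_cast (congrArg (Nat.cast : ℕ → ℝ) this).symm
    have hdiv : 4*L/Real.log T ≤ 4*L := by
      apply div_le_self (by linarith) hlogT_ge1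
    rw [hcast]
    have : ((m-1:ℕ):ℝ) ≤ 4 + 4*L := le_trans hm1bnd (by linarith)
    linarith
  -- upper bound on G m
  have hGm_pos := hGpos m
  have hGsplit : G m = G (m-1) * FF (m-1) := by
    have h := Finset.prod_Ico_succ_top (by omega : 4 ≤ m-1) FF
    rw [show m - 1 + 1 = m by omega] at h
    exact h
  have hGmT : G m < W * T := by
    rw [hGsplit]
    have h1 : G (m-1) < W := hmmin (m-1) (by omega)
    have h2 : FF (m-1) < T := (hFFgood (m-1) (by omega) (by omega)).2
    have h3 : 0 < G (m-1) := hGpos (m-1)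
    have h4 : 0 < FF (m-1) := hFFpos (m-1)
    exact mul_lt_mul'' h1 h2 h3.le h4.le
  -- the remaining-target chain
  set R := 60 * (N:ℝ) / G m with hRdef
  have hRpos : 0 < R := by positivity
  have hRub : R ≤ T^4 / 7 := by
    rw [hRdef, div_le_div_iff₀ hGm_pos (by norm_num : (0:ℝ) < 7)]
    have : 420 * (N:ℝ) ≤ G m * T^4 := by
      have := hmW
      rw [hWdef, div_le_iff₀ hT4pos] at this
      linarith
    linarith
  have hRlb : T^3 / 7 < R := by
    rw [hRdef, div_lt_div_iff₀ (by norm_num : (0:ℝ) < 7) hGm_pos]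
    have hWT : W * T * T^3 = 420 * N := by
      rw [hWdef]
      field_simp
    have h1 : G m * T^3 < W * T * T^3 := by
      apply mul_lt_mul_of_pos_right hGmT (by positivity)
    rw [hWT] at h1
    linarith
  -- prime 7 : j = 3
  set a₃ := R / T^3 with ha₃def
  have ha₃pos : 0 < a₃ := by positivity
  have ha₃ub : a₃ ≤ T/7 := by
    rw [ha₃def, div_le_div_iff₀ (by positivity) (by norm_num : (0:ℝ) < 7)]
    linarith only [hRub]
  obtain ⟨k₃, h₃l, h₃u⟩ := hit 7 (by norm_num) (show ((7:ℕ):ℝ)+1 ≤ max S a₃ by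
    push_cast
    linarith [hS1, le_max_left S a₃])
  push_cast at h₃l h₃u
  set f₃ : ℝ := 8 * 7^k₃ with hf₃def
  have hf₃l : max S a₃ ≤ f₃ := by rw [hf₃def]; linarith
  have hf₃u : f₃ < 7 * max S a₃ := by rw [hf₃def]; linarith
  have hf₃S : S ≤ f₃ := le_trans (le_max_left _ _) hf₃l
  have hf₃pos : 0 < f₃ := by linarith
  have hmaxST : max S a₃ ≤ T / 7 := max_le (by linarith) ha₃ub
  have hf₃T : f₃ < T := by
    calc f₃ < 7 * max S a₃ := hf₃u
      _ ≤ 7 * (T/7) := by linarith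
      _ = T := by ring
  set R₂ := R / f₃ with hR₂def
  have hR₂pos : 0 < R₂ := by positivity
  have hR₂ub : R₂ ≤ T^3 := by
    rw [hR₂def, div_le_iff₀ hf₃pos]
    have h1 : a₃ ≤ f₃ := le_trans (le_max_right _ _) hf₃l
    have h2 : R = a₃ * T^3 := by rw [ha₃def]; field_simp
    have p : a₃ * T^3 ≤ f₃ * T^3 := mul_le_mul_of_nonneg_right h1 (by positivity)
    linarith only [p, h2]
  have hR₂lb : T^2 * S / 49 < R₂ := by
    rw [hR₂def, div_lt_div_iff₀ (by norm_num : (0:ℝ) < 49) hf₃pos]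
    rcases le_total S a₃ with hc | hc
    · -- f₃ < 7 a₃ = 7R/T³
      have h1 : f₃ < 7 * a₃ := by rwa [max_eq_right hc] at hf₃u
      have h2 : a₃ * T^3 = R := by rw [ha₃def]; field_simp
      have p1 : T^2*S*f₃ < T^2*S*(7*a₃) := by
        apply mul_lt_mul_of_pos_left h1 (by positivity)
      have p2 : T^2*S*(7*a₃) ≤ 49*(a₃*T^3) := by
        have hS7T : S ≤ 7*T := by linarith only [hS_le_T, hT0]
        calc T^2*S*(7*a₃) = (7*a₃*T^2)*S := by ring
          _ ≤ (7*a₃*T^2)*(7*T) := by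
              apply mul_le_mul_of_nonneg_left hS7T (by positivity)
          _ = 49*(a₃*T^3) := by ring
      linarith only [p1, p2, h2]
    · -- f₃ < 7 S, and T³/7 < R
      have h1 : f₃ < 7 * S := by rwa [max_eq_left hc] at hf₃u
      have p1 : T^2*S*f₃ < T^2*S*(7*S) := by
        apply mul_lt_mul_of_pos_left h1 (by positivity)
      have p2 : T^2*S*(7*S) = 7*T^3 := by
        calc T^2*S*(7*S) = 7*T^2*(S*S) := by ring
          _ = 7*T^2*T := by rw [hSS]
          _ = 7*T^3 := by ring
      linarith only [p1, p2, hRlb]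
  -- prime 5 : j = 2
  set a₂ := R₂ / (5*T^2) with ha₂def
  have ha₂pos : 0 < a₂ := by positivity
  have ha₂ub : a₂ ≤ T/5 := by
    rw [ha₂def, div_le_div_iff₀ (by positivity) (by norm_num : (0:ℝ) < 5)]
    linarith only [hR₂ub]
  obtain ⟨k₂, h₂l, h₂u⟩ := hit 5 (by norm_num) (show ((5:ℕ):ℝ)+1 ≤ max S a₂ by
    push_cast
    linarith [hS1, le_max_left S a₂])
  push_cast at h₂l h₂u
  set f₂ : ℝ := 6 * 5^k₂ with hf₂def
  have hf₂l : max S a₂ ≤ f₂ := by rw [hf₂def]; linarith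
  have hf₂u : f₂ < 5 * max S a₂ := by rw [hf₂def]; linarith
  have hf₂S : S ≤ f₂ := le_trans (le_max_left _ _) hf₂l
  have hf₂pos : 0 < f₂ := by linarith
  have hf₂T : f₂ < T := by
    have hmax : max S a₂ ≤ T/5 := max_le (by linarith) ha₂ub
    calc f₂ < 5 * max S a₂ := hf₂u
      _ ≤ 5 * (T/5) := by linarith
      _ = T := by ring
  set R₁ := R₂ / f₂ with hR₁def
  have hR₁pos : 0 < R₁ := by positivity
  have hR₁ub : R₁ ≤ 5*T^2 := by
    rw [hR₁def, div_le_iff₀ hf₂pos]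
    have h1 : a₂ ≤ f₂ := le_trans (le_max_right _ _) hf₂l
    have h2 : R₂ = a₂ * (5*T^2) := by rw [ha₂def]; field_simp
    have p : a₂ * (5*T^2) ≤ f₂ * (5*T^2) := mul_le_mul_of_nonneg_right h1 (by positivity)
    linarith only [p, h2]
  have hR₁lb : T^2/245 < R₁ := by
    rw [hR₁def, div_lt_div_iff₀ (by norm_num : (0:ℝ) < 245) hf₂pos]
    rcases le_total S a₂ with hc | hc
    · have h1 : f₂ < 5 * a₂ := by rwa [max_eq_right hc] at hf₂u
      have h2 : a₂ * (5*T^2) = R₂ := by rw [ha₂def]; field_simp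
      have p1 : T^2*f₂ < T^2*(5*a₂) := by
        apply mul_lt_mul_of_pos_left h1 (by positivity)
      linarith only [p1, h2, hR₂pos]
    · have h1 : f₂ < 5 * S := by rwa [max_eq_left hc] at hf₂u
      have p1 : T^2*f₂ < T^2*(5*S) := by
        apply mul_lt_mul_of_pos_left h1 (by positivity)
      linarith only [p1, hR₂lb]
  -- prime 3 : j = 1
  set a₁ := R₁ / (15*T) with ha₁def
  have ha₁pos : 0 < a₁ := by positivity
  have ha₁ub : a₁ ≤ T/3 := by
    rw [ha₁def, div_le_div_iff₀ (by positivity) (by norm_num : (0:ℝ) < 3)]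
    linarith only [hR₁ub]
  have ha₁lb : T/3675 < a₁ := by
    rw [ha₁def, div_lt_div_iff₀ (by norm_num : (0:ℝ) < 3675) (by positivity)]
    linarith only [hR₁lb]
  have hSa₁ : S ≤ a₁ := by
    calc S ≤ T/3675 := hST
      _ ≤ a₁ := ha₁lb.le
  obtain ⟨k₁, h₁l, h₁u⟩ := hit 3 (by norm_num) (show ((3:ℕ):ℝ)+1 ≤ a₁ by
    push_cast; linarith)
  push_cast at h₁l h₁u
  set f₁ : ℝ := 4 * 3^k₁ with hf₁def
  have hf₁l : a₁ ≤ f₁ := by rw [hf₁def]; linarith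
  have hf₁u : f₁ < 3 * a₁ := by rw [hf₁def]; linarith
  have hf₁S : S ≤ f₁ := le_trans hSa₁ hf₁l
  have hf₁pos : 0 < f₁ := by linarith
  have hf₁T : f₁ < T := by
    calc f₁ < 3 * a₁ := hf₁u
      _ ≤ 3 * (T/3) := by linarith
      _ = T := by ring
  set R₀ := R₁ / f₁ with hR₀def
  have hR₀pos : 0 < R₀ := by positivity
  have hR₀ub : R₀ ≤ 15*T := by
    rw [hR₀def, div_le_iff₀ hf₁pos]
    have h2 : R₁ = a₁ * (15*T) := by rw [ha₁def]; field_simp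
    have p : a₁ * (15*T) ≤ f₁ * (15*T) := mul_le_mul_of_nonneg_right hf₁l (by positivity)
    linarith only [p, h2]
  have hR₀lb : 5*T < R₀ := by
    rw [hR₀def, lt_div_iff₀ hf₁pos]
    have h2 : a₁ * (15*T) = R₁ := by rw [ha₁def]; field_simp
    have p : (5*T)*f₁ < (5*T)*(3*a₁) := by
      apply mul_lt_mul_of_pos_left hf₁u (by positivity)
    linarith only [p, h2]
  -- prime 2 : j = 0
  obtain ⟨k₀, h₀l, h₀u⟩ := hit 2 (by norm_num) (show ((2:ℕ):ℝ)+1 ≤ T/2 by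
    push_cast; linarith)
  push_cast at h₀l h₀u
  set f₀ : ℝ := 3 * 2^k₀ with hf₀def
  have hf₀l : T/2 ≤ f₀ := by rw [hf₀def]; linarith
  have hf₀u : f₀ < T := by rw [hf₀def]; linarith
  have hf₀pos : 0 < f₀ := by linarith
  -- total product
  have hunits : G m * f₃ * f₂ * f₁ = 60 * (N:ℝ) / R₀ := by
    rw [hR₀def, hR₁def, hR₂def, hRdef]
    field_simp
  have hPeq : G m * f₃ * f₂ * f₁ * f₀ = 60 * (N:ℝ) * f₀ / R₀ := by
    rw [hunits]; ring
  have hPlb : 2 * (N:ℝ) ≤ G m * f₃ * f₂ * f₁ * f₀ := by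
    rw [hPeq, le_div_iff₀ hR₀pos]
    have p1 : 2*(N:ℝ)*R₀ ≤ 2*(N:ℝ)*(15*T) := by
      apply mul_le_mul_of_nonneg_left hR₀ub (by positivity)
    have p2 : 60*(N:ℝ)*(T/2) ≤ 60*(N:ℝ)*f₀ := by
      apply mul_le_mul_of_nonneg_left hf₀l (by positivity)
    linarith only [p1, p2]
  have hPub : G m * f₃ * f₂ * f₁ * f₀ < 12 * (N:ℝ) := by
    rw [hPeq, div_lt_iff₀ hR₀pos]
    have p1 : 60*(N:ℝ)*f₀ < 60*(N:ℝ)*T := by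
      apply mul_lt_mul_of_pos_left hf₀u (by positivity)
    have p2 : 12*(N:ℝ)*(5*T) < 12*(N:ℝ)*R₀ := by
      apply mul_lt_mul_of_pos_left hR₀lb (by positivity)
    linarith only [p1, p2]
  -- exponent function
  set eF : ℕ → ℕ := fun j =>
    if j = 0 then k₀+1 else if j = 1 then k₁+1 else if j = 2 then k₂+1
    else if j = 3 then k₃+1 else Ebig j with heFdef
  -- values of the factors
  have hPhiEq : ∀ i : ℕ, PhiL m (fun i' => eF (m - i')) i
      = (q (m-i) : ℝ)^(eF (m-i) - 1) * ((q (m-i):ℝ)+1) := by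
    intro i
    simp only [PhiL, ← hqdef]
    push_cast
    ring
  have heF0 : eF 0 = k₀ + 1 := by rw [heFdef]; norm_num
  have heF1 : eF 1 = k₁ + 1 := by rw [heFdef]; norm_num
  have heF2 : eF 2 = k₂ + 1 := by rw [heFdef]; norm_num
  have heF3 : eF 3 = k₃ + 1 := by rw [heFdef]; norm_num
  have hval0 : (q 0 : ℝ)^(eF 0 - 1) * ((q 0:ℝ)+1) = f₀ := by
    rw [heF0, hq0, hf₀def]
    push_cast [Nat.add_sub_cancel]
    ring
  have hval1 : (q 1 : ℝ)^(eF 1 - 1) * ((q 1:ℝ)+1) = f₁ := by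
    rw [heF1, hq1, hf₁def]
    push_cast [Nat.add_sub_cancel]
    ring
  have hval2 : (q 2 : ℝ)^(eF 2 - 1) * ((q 2:ℝ)+1) = f₂ := by
    rw [heF2, hq2, hf₂def]
    push_cast [Nat.add_sub_cancel]
    ring
  have hval3 : (q 3 : ℝ)^(eF 3 - 1) * ((q 3:ℝ)+1) = f₃ := by
    rw [heF3, hq3, hf₃def]
    push_cast [Nat.add_sub_cancel]
    ring
  have hvalBig : ∀ j, 4 ≤ j → (q j:ℝ)^(eF j - 1) * ((q j:ℝ)+1) = FF j := by
    intro j hj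
    have heq : eF j = Ebig j := by
      simp only [heFdef]
      rw [if_neg (by omega), if_neg (by omega), if_neg (by omega), if_neg (by omega)]
    rw [heq, hFFdef]
  -- the product identity
  have hprodEq : ∏ i ∈ Finset.Icc 1 m, PhiL m (fun i' => eF (m - i')) i
      = G m * f₃ * f₂ * f₁ * f₀ := by
    have h1 : ∏ i ∈ Finset.Icc 1 m, PhiL m (fun i' => eF (m - i')) i
        = ∏ j ∈ Finset.range m, (q j : ℝ)^(eF j - 1) * ((q j:ℝ)+1) := by
      apply Finset.prod_nbij' (fun i => m - i) (fun j => m - j)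
      · intro a ha
        rw [Finset.mem_Icc] at ha
        rw [Finset.mem_range]
        omega
      · intro a ha
        rw [Finset.mem_range] at ha
        rw [Finset.mem_Icc]
        omega
      · intro a ha
        rw [Finset.mem_Icc] at ha
        omega
      · intro a ha
        rw [Finset.mem_range] at ha
        omega
      · intro a _
        exact hPhiEq a
    rw [h1, Finset.range_eq_Ico,
      ← Finset.prod_Ico_consecutive _ (by omega : 0 ≤ 4) (by omega : 4 ≤ m)]
    have h3 : ∏ j ∈ Finset.Ico 0 4, ((q j : ℝ)^(eF j - 1) * ((q j:ℝ)+1))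
        = f₀ * f₁ * f₂ * f₃ := by
      rw [show Finset.Ico 0 4 = Finset.range 4 from (Finset.range_eq_Ico 4).symm]
      rw [Finset.prod_range_succ, Finset.prod_range_succ, Finset.prod_range_succ,
        Finset.prod_range_one]
      rw [hval0, hval1, hval2, hval3]
    have h4 : ∏ j ∈ Finset.Ico 4 m, ((q j : ℝ)^(eF j - 1) * ((q j:ℝ)+1)) = G m := by
      rw [hGdef]
      exact Finset.prod_congr rfl (fun j hj => hvalBig j (Finset.mem_Ico.mp hj).1)
    rw [h3, h4]
    ring
  refine ⟨m, fun i => eF (m - i), by omega, hmbnd, ?_, ?_, ?_, ?_⟩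
  · -- exponents ≥ 1
    intro i _ _
    simp only [heFdef]
    split_ifs <;> first | omega | exact hE1 _
  · -- middle factors
    intro i hi1 hi2
    rw [hPhiEq i]
    set j := m - i with hjdef
    have hj1 : 1 ≤ j := by omega
    have hjm : j ≤ m - 1 := by omega
    have hcases : j = 1 ∨ j = 2 ∨ j = 3 ∨ 4 ≤ j := by omega
    rcases hcases with h | h | h | h
    · rw [h, hval1]; exact ⟨hf₁S, hf₁T⟩
    · rw [h, hval2]; exact ⟨hf₂S, hf₂T⟩
    · rw [h, hval3]; exact ⟨hf₃S, hf₃T⟩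
    · rw [hvalBig j h]
      exact hFFgood j h (by omega)
  · -- last factor
    rw [hPhiEq m]
    rw [show m - m = 0 by omega, hval0]
    constructor
    · calc 400 / 2 * L = T / 2 := by rw [hTdef]; ring
        _ ≤ f₀ := hf₀l
    · exact hf₀u
  · -- product bounds
    rw [hprodEq]
    constructor
    · exact hPlb
    · exact hPub
end

section
/- There exists a constant C₃ > 0 with the following property: for every integer N > B admitting a good-degree basis L₁, L₂, …, Lₙ with n > 7, one has ∑_{i=1}^{n−6} (n−i)·∏_{j=1}^{i} Φ(Lⱼ) < C₃·N/(log N)². -/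
/-- `L₁, …, Lₙ` (encoded by the exponent function `e`) is a good-degree basis for `N`,
with respect to the constants `C₀, C₁, C₂`. -/
def GoodDegreeBasis (C₀ C₁ C₂ : ℝ) (N n : ℕ) (e : ℕ → ℕ) : Prop :=
  (∀ i, 1 ≤ i → i ≤ n → 1 ≤ e i) ∧
  (∀ i, 1 ≤ i → i ≤ n - 1 →
    Real.sqrt (C₀ * Real.log N) ≤ PhiL n e i ∧ PhiL n e i < C₀ * Real.log N) ∧
  (C₀ / 2 * Real.log N ≤ PhiL n e n ∧ PhiL n e n < C₀ * Real.log N) ∧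
  C₁ * N ≤ ∏ i ∈ Finset.Icc 1 n, PhiL n e i ∧
  ∏ i ∈ Finset.Icc 1 n, PhiL n e i < C₂ * N

lemma three_le_PhiL (n : ℕ) (e : ℕ → ℕ) (i : ℕ) : (3 : ℝ) ≤ PhiL n e i := by
  unfold PhiL
  have hp : 2 ≤ Nat.nth Nat.Prime (n - i) := (Nat.prime_nth_prime (n - i)).two_le
  have h1 : 1 ≤ (Nat.nth Nat.Prime (n - i)) ^ (e i - 1) :=
    Nat.one_le_pow _ _ (by omega)
  have h3 : 3 ≤ (Nat.nth Nat.Prime (n - i)) ^ (e i - 1) * ((Nat.nth Nat.Prime (n - i)) + 1) := by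
    calc 3 ≤ 1 * ((Nat.nth Nat.Prime (n - i)) + 1) := by omega
    _ ≤ _ := Nat.mul_le_mul h1 le_rfl
  exact_mod_cast h3

lemma PhiL_nonneg (n : ℕ) (e : ℕ → ℕ) (i : ℕ) : (0 : ℝ) ≤ PhiL n e i := by
  unfold PhiL; positivity

lemma six_add_le (j : ℕ) : (6 + j : ℝ) ≤ 6 * (4 / 3) ^ j := by
  induction j with
  | zero => norm_num
  | succ k ih =>
    have h : (1 : ℝ) ≤ (4 / 3) ^ k := one_le_pow₀ (by norm_num)
    rw [pow_succ]
    push_cast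
    push_cast at ih
    nlinarith [ih, h]

lemma geom_tail_le (m : ℕ) : ∑ i ∈ Finset.Icc 1 m, (4 / 5 : ℝ) ^ (m - i) ≤ 5 := by
  induction m with
  | zero => simp
  | succ k ih =>
    rw [Finset.sum_Icc_succ_top (by omega)]
    have hre : ∑ i ∈ Finset.Icc 1 k, (4 / 5 : ℝ) ^ (k + 1 - i)
        = (4 / 5) * ∑ i ∈ Finset.Icc 1 k, (4 / 5 : ℝ) ^ (k - i) := by
      rw [Finset.mul_sum]
      refine Finset.sum_congr rfl fun i hi => ?_
      have hik : i ≤ k := (Finset.mem_Icc.mp hi).2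
      rw [show k + 1 - i = (k - i) + 1 by omega, pow_succ]
      ring
    rw [hre, Nat.sub_self, pow_zero]
    nlinarith [ih]

/-- For the fixed constants `B, C₀, C₁, C₂` of the good-degree-basis existence lemma,
there is a constant `C₃ > 0` such that for every `N > B` admitting a good-degree basis
`L₁, …, Lₙ` with `n > 7`, one has
`∑_{i=1}^{n-6} (n - i) ∏_{j=1}^{i} Φ(Lⱼ) < C₃ * N / (log N)²`. -/
theorem good_degree_basis_critical_bound
    (B : ℕ) (C₀ C₁ C₂ : ℝ) (hC₀ : 0 < C₀) (hC₁ : 1 < C₁) (hC₁₂ : C₁ < C₂) :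
    ∃ C₃ : ℝ, 0 < C₃ ∧
      ∀ (N n : ℕ) (e : ℕ → ℕ), B < N → 7 < n → GoodDegreeBasis C₀ C₁ C₂ N n e →
        ∑ i ∈ Finset.Icc 1 (n - 6), ((n : ℝ) - i) * ∏ j ∈ Finset.Icc 1 i, PhiL n e j
          < C₃ * N / Real.log N ^ 2 := by
  have hC₂ : 0 < C₂ := by linarith
  refine ⟨60 * C₂ / C₀ ^ 2 + 1, by positivity, ?_⟩
  intro N n e hBN hn7 hbasis
  obtain ⟨he1, h2, ⟨hn1, hn2⟩, hP1, hP2⟩ := hbasis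
  set L := Real.log N with hLdef
  have hΦn3 : (3 : ℝ) ≤ PhiL n e n := three_le_PhiL n e n
  have h3L : 3 < C₀ * L := lt_of_le_of_lt hΦn3 hn2
  have hL : 0 < L := by nlinarith
  set s := Real.sqrt (C₀ * L) with hsdef
  have hs2 : s ^ 2 = C₀ * L := Real.sq_sqrt (by positivity)
  have hsnn : 0 ≤ s := Real.sqrt_nonneg _
  have hs53 : 5 / 3 < s := by nlinarith
  have hs0 : 0 < s := by linarith
  set t := 1 / s with htdef
  have ht0 : 0 < t := by positivity
  have ht35 : t < 3 / 5 := by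
    rw [htdef, div_lt_div_iff₀ hs0 (by norm_num : (0:ℝ) < 5)]; linarith
  have hN1 : (1 : ℝ) ≤ N := by exact_mod_cast Nat.one_le_iff_ne_zero.mpr (by omega)
  -- key per-term bound
  have hkey : ∀ i ∈ Finset.Icc 1 (n - 6),
      ((n : ℝ) - i) * ∏ j ∈ Finset.Icc 1 i, PhiL n e j
        ≤ (2 * C₂ * N * (6 * t ^ 7)) * (4 / 5) ^ ((n - 6) - i) := by
    intro i hi
    obtain ⟨hi1, hi2⟩ := Finset.mem_Icc.mp hi
    have hiln : i < n := by omega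
    set k := n - i with hkdef
    have hk6 : 6 ≤ k := by omega
    have hcast : ((n : ℝ) - i) = (k : ℝ) := by
      rw [hkdef]; push_cast [Nat.cast_sub hiln.le]; ring
    -- product split
    have hsplit : (∏ j ∈ Finset.Icc 1 i, PhiL n e j) * (∏ j ∈ Finset.Ioc i n, PhiL n e j)
        = ∏ j ∈ Finset.Icc 1 n, PhiL n e j := by
      rw [show Finset.Icc 1 i = Finset.Ioc 0 i from Finset.Icc_add_one_left_eq_Ioc 0 i,
        show Finset.Icc 1 n = Finset.Ioc 0 n from Finset.Icc_add_one_left_eq_Ioc 0 n]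
      exact Finset.prod_Ioc_consecutive _ (Nat.zero_le i) hiln.le
    -- tail lower bound
    have hT' : s ^ (n - 1 - i) ≤ ∏ j ∈ Finset.Ioc i (n - 1), PhiL n e j := by
      calc s ^ (n - 1 - i) = ∏ _j ∈ Finset.Ioc i (n - 1), s := by
            rw [Finset.prod_const, Nat.card_Ioc]
        _ ≤ _ := by
            refine Finset.prod_le_prod (fun j _ => hsnn) fun j hj => ?_
            obtain ⟨hj1, hj2⟩ := Finset.mem_Ioc.mp hj
            exact (h2 j (by omega) hj2).1
    have hIocsingle : Finset.Ioc (n - 1) n = {n} := by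
      ext x; simp only [Finset.mem_Ioc, Finset.mem_singleton]; omega
    have hT : s ^ (n - 1 - i) * (C₀ / 2 * L) ≤ ∏ j ∈ Finset.Ioc i n, PhiL n e j := by
      rw [← Finset.prod_Ioc_consecutive _ (by omega : i ≤ n - 1) (by omega : n - 1 ≤ n),
        hIocsingle, Finset.prod_singleton]
      exact mul_le_mul hT' hn1 (by positivity)
        (Finset.prod_nonneg fun j _ => PhiL_nonneg n e j)
    have hTeq : s ^ (n - 1 - i) * (C₀ / 2 * L) = s ^ (k + 1) / 2 := by
      rw [show C₀ / 2 * L = s ^ 2 / 2 by rw [hs2]; ring,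
        show k + 1 = (n - 1 - i) + 2 by omega, pow_add]
      ring
    -- partial product bound
    have hPi : (∏ j ∈ Finset.Icc 1 i, PhiL n e j) * (s ^ (k + 1) / 2) ≤ C₂ * N := by
      calc (∏ j ∈ Finset.Icc 1 i, PhiL n e j) * (s ^ (k + 1) / 2)
          ≤ (∏ j ∈ Finset.Icc 1 i, PhiL n e j) * ∏ j ∈ Finset.Ioc i n, PhiL n e j := by
            refine mul_le_mul_of_nonneg_left (hTeq ▸ hT)
              (Finset.prod_nonneg fun j _ => PhiL_nonneg n e j)
        _ = ∏ j ∈ Finset.Icc 1 n, PhiL n e j := hsplit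
        _ ≤ C₂ * N := hP2.le
    have hsk : 0 < s ^ (k + 1) := pow_pos hs0 _
    have hPi' : ∏ j ∈ Finset.Icc 1 i, PhiL n e j ≤ 2 * C₂ * N * t ^ (k + 1) := by
      rw [htdef, one_div, inv_pow, ← div_eq_mul_inv, le_div_iff₀ hsk]
      nlinarith [hPi]
    -- coefficient bound: k * t^(k+1) ≤ 6 * t^7 * (4/5)^(k-6)
    obtain ⟨j, hj⟩ : ∃ j, k = j + 6 := ⟨k - 6, by omega⟩
    have hcoef : (k : ℝ) * t ^ (k + 1) ≤ 6 * t ^ 7 * (4 / 5) ^ (k - 6) := by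
      rw [hj]
      have h1 : ((j : ℝ) + 6) * t ^ j ≤ 6 * (4 / 3) ^ j * t ^ j := by
        refine mul_le_mul_of_nonneg_right ?_ (by positivity)
        have := six_add_le j; linarith
      have h2' : (4 / 3 : ℝ) ^ j * t ^ j ≤ (4 / 5) ^ j := by
        rw [← mul_pow]
        refine pow_le_pow_left₀ (by positivity) (by linarith) j
      calc ((j + 6 : ℕ) : ℝ) * t ^ (j + 6 + 1)
          = (((j : ℝ) + 6) * t ^ j) * t ^ 7 := by push_cast; ring
        _ ≤ (6 * (4 / 3) ^ j * t ^ j) * t ^ 7 :=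
            mul_le_mul_of_nonneg_right h1 (by positivity)
        _ = 6 * t ^ 7 * ((4 / 3) ^ j * t ^ j) := by ring
        _ ≤ 6 * t ^ 7 * (4 / 5) ^ j := by
            refine mul_le_mul_of_nonneg_left h2' (by positivity)
        _ = 6 * t ^ 7 * (4 / 5) ^ (j + 6 - 6) := by norm_num
    have hexp : k - 6 = (n - 6) - i := by omega
    rw [hcast]
    calc (k : ℝ) * ∏ j ∈ Finset.Icc 1 i, PhiL n e j
        ≤ (k : ℝ) * (2 * C₂ * N * t ^ (k + 1)) := by
          refine mul_le_mul_of_nonneg_left hPi' (by positivity)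
      _ = 2 * C₂ * N * ((k : ℝ) * t ^ (k + 1)) := by ring
      _ ≤ 2 * C₂ * N * (6 * t ^ 7 * (4 / 5) ^ (k - 6)) := by
          refine mul_le_mul_of_nonneg_left hcoef (by positivity)
      _ = (2 * C₂ * N * (6 * t ^ 7)) * (4 / 5) ^ ((n - 6) - i) := by rw [hexp]; ring
  -- sum the bounds
  have hsum : ∑ i ∈ Finset.Icc 1 (n - 6), ((n : ℝ) - i) * ∏ j ∈ Finset.Icc 1 i, PhiL n e j
      ≤ 60 * C₂ * N * t ^ 7 := by
    calc ∑ i ∈ Finset.Icc 1 (n - 6), ((n : ℝ) - i) * ∏ j ∈ Finset.Icc 1 i, PhiL n e j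
        ≤ ∑ i ∈ Finset.Icc 1 (n - 6), (2 * C₂ * N * (6 * t ^ 7)) * (4 / 5) ^ ((n - 6) - i) :=
          Finset.sum_le_sum hkey
      _ = (2 * C₂ * N * (6 * t ^ 7)) * ∑ i ∈ Finset.Icc 1 (n - 6), (4 / 5 : ℝ) ^ ((n - 6) - i) := by
          rw [Finset.mul_sum]
      _ ≤ (2 * C₂ * N * (6 * t ^ 7)) * 5 := by
          refine mul_le_mul_of_nonneg_left (geom_tail_le (n - 6)) (by positivity)
      _ = 60 * C₂ * N * t ^ 7 := by ring
  have ht1 : t ≤ 1 := by linarith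
  have ht7 : t ^ 7 ≤ t ^ 4 := pow_le_pow_of_le_one ht0.le ht1 (by norm_num)
  have ht4 : t ^ 4 = 1 / (C₀ ^ 2 * L ^ 2) := by
    rw [htdef, div_pow, one_pow, show s ^ 4 = (s ^ 2) ^ 2 by ring, hs2]
    ring_nf
  have hfinal : 60 * C₂ * N * t ^ 4 < (60 * C₂ / C₀ ^ 2 + 1) * N / L ^ 2 := by
    rw [ht4]
    have hNL : (0 : ℝ) < N / L ^ 2 := div_pos (by linarith) (by positivity)
    have heq : (60 * C₂ / C₀ ^ 2 + 1) * N / L ^ 2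
        - 60 * C₂ * N * (1 / (C₀ ^ 2 * L ^ 2)) = N / L ^ 2 := by
      field_simp
      ring
    linarith
  calc ∑ i ∈ Finset.Icc 1 (n - 6), ((n : ℝ) - i) * ∏ j ∈ Finset.Icc 1 i, PhiL n e j
      ≤ 60 * C₂ * N * t ^ 7 := hsum
    _ ≤ 60 * C₂ * N * t ^ 4 := by
        refine mul_le_mul_of_nonneg_left ht7 (by positivity)
    _ < (60 * C₂ / C₀ ^ 2 + 1) * N / L ^ 2 := hfinal
end
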